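/- Suppose |e^{A^c t} x| ≤ K e^{γ|t|}|x| for all t ∈ ℝ and |e^{A^s t} y| ≤ K e^{−β t}|y| for t ≥ 0 with β > γ ≥ 0, K ≥ 1. Then for any η with γ < η < β, the operator T on the space of continuous functions Y: (−∞, 0] → ℝ^m with sup_{t≤0} e^{η t}|Y(t)| < ∞ defined by (TY)(t) = ∫_{−∞}^t e^{A^s(t−τ)} G(τ) dτ, where G is continuous with sup_{τ≤0} e^{η τ}|G(τ)| = M < ∞, yields a well-defined element with sup_{t≤0} e^{η t}|(TY)(t)| ≤ K M/(β − η). -/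

import Mathlib

open MeasureTheory Real

lemma exp_mul_integrableOn_Iic {c : ℝ} (hc : 0 < c) (t : ℝ) :
    IntegrableOn (fun τ => Real.exp (c * τ)) (Set.Iic t) := by
  refine integrableOn_Iic_of_intervalIntegral_norm_bounded (Real.exp (c * t) / c) t
    (fun y => ((Real.continuous_exp.comp
      (continuous_const.mul continuous_id)).intervalIntegrable _ _).1) Filter.tendsto_id ?_
  filter_upwards [Filter.Iic_mem_atBot t] with y (hy : y ≤ t)
  have h1 : (∫ x in y..t, Real.exp (c * x)) = c⁻¹ • (Real.exp (c * t) - Real.exp (c * y)) := by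
    rw [show (fun x => Real.exp (c * x)) = fun x => Real.exp (c * x) from rfl,
      intervalIntegral.integral_comp_mul_left Real.exp hc.ne', integral_exp]
  simp_rw [id_eq, Real.norm_of_nonneg (Real.exp_pos _).le]
  rw [h1, smul_eq_mul, div_eq_inv_mul]
  have hle : Real.exp (c * t) - Real.exp (c * y) ≤ Real.exp (c * t) := by
    have := Real.exp_pos (c * y); linarith
  exact mul_le_mul_of_nonneg_left hle (inv_pos.mpr hc).le

lemma integral_exp_mul_Iic' {c : ℝ} (hc : 0 < c) (t : ℝ) :
    (∫ τ in Set.Iic t, Real.exp (c * τ)) = Real.exp (c * t) / c := by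
  refine tendsto_nhds_unique (MeasureTheory.intervalIntegral_tendsto_integral_Iic _
    (exp_mul_integrableOn_Iic hc t) Filter.tendsto_id) ?_
  have h1 : ∀ y : ℝ, (∫ x in y..t, Real.exp (c * x))
      = c⁻¹ * (Real.exp (c * t) - Real.exp (c * y)) := by
    intro y
    rw [intervalIntegral.integral_comp_mul_left Real.exp hc.ne', integral_exp,
      smul_eq_mul]
  simp_rw [id, h1]
  have : Filter.Tendsto (fun y : ℝ => Real.exp (c * y)) Filter.atBot (nhds 0) :=
    Real.tendsto_exp_atBot.comp ((Filter.tendsto_const_mul_atBot_of_pos hc).mpr Filter.tendsto_id)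
  have h2 : Filter.Tendsto (fun y : ℝ => c⁻¹ * (Real.exp (c * t) - Real.exp (c * y)))
      Filter.atBot (nhds (c⁻¹ * (Real.exp (c * t) - 0))) :=
    (tendsto_const_nhds.sub this).const_mul _
  simpa [div_eq_inv_mul] using h2

/-- Lyapunov–Perron boundedness estimate. Suppose
`‖e^{A^c t} x‖ ≤ K e^{γ|t|} ‖x‖` for all `t` and `‖e^{A^s t} y‖ ≤ K e^{-β t} ‖y‖` for
`t ≥ 0`, with `β > γ ≥ 0`, `K ≥ 1`, and let `γ < η < β`. If `G : ℝ → ℝ^m` is continuous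
with `e^{ητ} ‖G τ‖ ≤ M` for `τ ≤ 0`, then for every `t ≤ 0` the integral
`(TY)(t) = ∫_{-∞}^t e^{A^s (t-τ)} G τ dτ` is well defined and
`e^{η t} ‖(TY)(t)‖ ≤ K M / (β - η)`. -/
theorem stmt15 (n m : ℕ)
    (Ac : EuclideanSpace ℝ (Fin n) →L[ℝ] EuclideanSpace ℝ (Fin n))
    (As : EuclideanSpace ℝ (Fin m) →L[ℝ] EuclideanSpace ℝ (Fin m))
    (K γ β η M : ℝ) (hK : 1 ≤ K) (hγ : 0 ≤ γ) (hγβ : γ < β)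
    (hγη : γ < η) (hηβ : η < β) (hM : 0 ≤ M)
    (hAc : ∀ t : ℝ, ∀ x : EuclideanSpace ℝ (Fin n),
      ‖NormedSpace.exp (t • Ac) x‖ ≤ K * Real.exp (γ * |t|) * ‖x‖)
    (hAs : ∀ t : ℝ, 0 ≤ t → ∀ y : EuclideanSpace ℝ (Fin m),
      ‖NormedSpace.exp (t • As) y‖ ≤ K * Real.exp (-β * t) * ‖y‖)
    (G : ℝ → EuclideanSpace ℝ (Fin m)) (hG : Continuous G)
    (hGM : ∀ τ : ℝ, τ ≤ 0 → Real.exp (η * τ) * ‖G τ‖ ≤ M) :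
    ∀ t : ℝ, t ≤ 0 →
      IntegrableOn (fun τ => NormedSpace.exp ((t - τ) • As) (G τ)) (Set.Iic t) ∧
      Real.exp (η * t) * ‖∫ τ in Set.Iic t, NormedSpace.exp ((t - τ) • As) (G τ)‖
        ≤ K * M / (β - η) := by
  intro t ht
  have hβη : 0 < β - η := by linarith
  have hK0 : 0 ≤ K := le_trans zero_le_one hK
  -- continuity of the integrand
  have hcont : Continuous fun τ => NormedSpace.exp ((t - τ) • As) (G τ) := by
    let +nondep : NormedAlgebra ℚ (EuclideanSpace ℝ (Fin m) →L[ℝ] EuclideanSpace ℝ (Fin m)) :=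
      .restrictScalars ℚ ℝ _
    exact (NormedSpace.exp_continuous.comp
      (((continuous_const.sub continuous_id).smul continuous_const))).clm_apply hG
  -- pointwise bound on Iic t
  have hbound : ∀ τ ∈ Set.Iic t, ‖NormedSpace.exp ((t - τ) • As) (G τ)‖
      ≤ K * M * Real.exp (-β * t) * Real.exp ((β - η) * τ) := by
    intro τ hτ
    have hτt : τ ≤ t := hτ
    have hτ0 : τ ≤ 0 := le_trans hτt ht
    have h1 : ‖NormedSpace.exp ((t - τ) • As) (G τ)‖
        ≤ K * Real.exp (-β * (t - τ)) * ‖G τ‖ := hAs (t - τ) (by linarith) (G τ)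
    have hGτ : ‖G τ‖ ≤ M * Real.exp (-(η * τ)) := by
      have := hGM τ hτ0
      have h2 : Real.exp (η * τ) * ‖G τ‖ * Real.exp (-(η * τ))
          ≤ M * Real.exp (-(η * τ)) :=
        mul_le_mul_of_nonneg_right this (Real.exp_pos _).le
      calc ‖G τ‖ = Real.exp (η * τ) * ‖G τ‖ * Real.exp (-(η * τ)) := by
            rw [mul_comm (Real.exp (η * τ)) _, mul_assoc, ← Real.exp_add]
            simp
        _ ≤ M * Real.exp (-(η * τ)) := h2
    calc ‖NormedSpace.exp ((t - τ) • As) (G τ)‖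
        ≤ K * Real.exp (-β * (t - τ)) * ‖G τ‖ := h1
      _ ≤ K * Real.exp (-β * (t - τ)) * (M * Real.exp (-(η * τ))) := by
          refine mul_le_mul_of_nonneg_left hGτ ?_
          positivity
      _ = K * M * Real.exp (-β * t) * Real.exp ((β - η) * τ) := by
          have hexp : Real.exp (-β * (t - τ)) * Real.exp (-(η * τ))
              = Real.exp (-β * t) * Real.exp ((β - η) * τ) := by
            rw [← Real.exp_add, ← Real.exp_add]; ring_nf
          calc K * Real.exp (-β * (t - τ)) * (M * Real.exp (-(η * τ)))
              = K * M * (Real.exp (-β * (t - τ)) * Real.exp (-(η * τ))) := by ring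
            _ = K * M * (Real.exp (-β * t) * Real.exp ((β - η) * τ)) := by rw [hexp]
            _ = K * M * Real.exp (-β * t) * Real.exp ((β - η) * τ) := by ring
  -- integrability of the dominating function
  have hgint : IntegrableOn
      (fun τ => K * M * Real.exp (-β * t) * Real.exp ((β - η) * τ)) (Set.Iic t) :=
    (exp_mul_integrableOn_Iic hβη t).const_mul _
  have hint : IntegrableOn (fun τ => NormedSpace.exp ((t - τ) • As) (G τ)) (Set.Iic t) := by
    refine Integrable.mono' hgint (hcont.aestronglyMeasurable.restrict) ?_
    filter_upwards [ae_restrict_mem measurableSet_Iic] with τ hτ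
    exact hbound τ hτ
  refine ⟨hint, ?_⟩
  -- compute the integral of the dominating function
  have hval : (∫ τ in Set.Iic t, K * M * Real.exp (-β * t) * Real.exp ((β - η) * τ))
      = K * M * Real.exp (-β * t) * (Real.exp ((β - η) * t) / (β - η)) := by
    rw [MeasureTheory.integral_const_mul, integral_exp_mul_Iic' hβη]
  have hnorm : ‖∫ τ in Set.Iic t, NormedSpace.exp ((t - τ) • As) (G τ)‖
      ≤ K * M * Real.exp (-β * t) * (Real.exp ((β - η) * t) / (β - η)) := by
    rw [← hval]
    refine MeasureTheory.norm_integral_le_of_norm_le hgint ?_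
    filter_upwards [ae_restrict_mem measurableSet_Iic] with τ hτ
    exact hbound τ hτ
  have key : Real.exp (η * t) * (K * M * Real.exp (-β * t) * (Real.exp ((β - η) * t) / (β - η)))
      = K * M / (β - η) := by
    have h1 : Real.exp (η * t) * Real.exp (-β * t) * Real.exp ((β - η) * t) = 1 := by
      rw [← Real.exp_add, ← Real.exp_add,
        show η * t + -β * t + (β - η) * t = 0 by ring, Real.exp_zero]
    calc Real.exp (η * t) * (K * M * Real.exp (-β * t) * (Real.exp ((β - η) * t) / (β - η)))
        = (Real.exp (η * t) * Real.exp (-β * t) * Real.exp ((β - η) * t)) * (K * M / (β - η)) := by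
          ring
      _ = K * M / (β - η) := by rw [h1, one_mul]
  calc Real.exp (η * t) * ‖∫ τ in Set.Iic t, NormedSpace.exp ((t - τ) • As) (G τ)‖
      ≤ Real.exp (η * t) * (K * M * Real.exp (-β * t) * (Real.exp ((β - η) * t) / (β - η))) :=
        mul_le_mul_of_nonneg_left hnorm (Real.exp_pos _).le
    _ = K * M / (β - η) := key
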